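/- For every graph G, AT(G) ≥ 1 + ⌈m(G)⌉, where m(G) = max{ e(H)/v(H) : H a nonempty subgraph of G } is the maximum density of G. -/

import Mathlib

open MvPolynomial Finset

lemma key_aux {n : ℕ} (S : Finset (Fin n)) (F : Finset (Fin n × Fin n)) :
    ∀ (t : Fin n →₀ ℕ),
    MvPolynomial.coeff t (∏ p ∈ F, (X p.1 - X p.2 : MvPolynomial (Fin n) ℝ)) ≠ 0 →
    (F.filter (fun p => p.1 ∈ S ∧ p.2 ∈ S)).card ≤ ∑ i ∈ S, t i := by
  classical
  induction F using Finset.induction_on with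
  | empty => intro t _; simp
  | insert _ _ ha =>
    rename_i a F IH
    intro t ht
    rw [Finset.prod_insert ha, sub_mul, coeff_sub] at ht
    set P : MvPolynomial (Fin n) ℝ := ∏ p ∈ F, (X p.1 - X p.2) with hP
    have hcase : coeff t (X a.1 * P) ≠ 0 ∨ coeff t (X a.2 * P) ≠ 0 := by
      by_contra h
      push_neg at h
      rw [h.1, h.2, sub_self] at ht
      exact ht rfl
    have main : ∀ c : Fin n, (a.1 ∈ S ∧ a.2 ∈ S → c ∈ S) →
        coeff t (X c * P) ≠ 0 →
        (Finset.filter (fun p => p.1 ∈ S ∧ p.2 ∈ S) (insert a F)).card ≤ ∑ i ∈ S, t i := by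
      intro c hc h
      rw [coeff_X_mul'] at h
      split_ifs at h with hmem
      · have htc : 1 ≤ t c := by
          rw [Finsupp.mem_support_iff] at hmem; omega
        have hIH := IH _ h
        have hsum : ∑ i ∈ S, (t - Finsupp.single c 1 : Fin n →₀ ℕ) i + (if c ∈ S then 1 else 0)
            = ∑ i ∈ S, t i := by
          rw [← Finset.sum_ite_eq' S c (fun _ => 1), ← Finset.sum_add_distrib]
          apply Finset.sum_congr rfl
          intro i _
          simp only [Finsupp.coe_tsub, Pi.sub_apply, Finsupp.single_apply]
          rcases eq_or_ne i c with hi | hi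
          · subst hi; simp only [if_pos rfl, if_true]; omega
          · simp [hi, Ne.symm hi]
        have hfilter : (Finset.filter (fun p => p.1 ∈ S ∧ p.2 ∈ S) (insert a F)).card
            ≤ (F.filter (fun p => p.1 ∈ S ∧ p.2 ∈ S)).card + (if c ∈ S then 1 else 0) := by
          rw [Finset.filter_insert]
          split_ifs with h1 h2
          · exact le_trans (Finset.card_insert_le _ _) (by omega)
          · exact absurd (hc h1) h2
          · omega
          · omega
        omega
      · exact absurd rfl h
    rcases hcase with h | h
    · exact main a.1 (fun hh => hh.1) h
    · exact main a.2 (fun hh => hh.2) h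

/-- The graph polynomial `P_G = ∏_{(i,j) ∈ E, i < j} (xᵢ - xⱼ)`. -/
noncomputable def graphPoly {V : Type} [Fintype V] [LinearOrder V] (G : SimpleGraph V)
    [DecidableRel G.Adj] : MvPolynomial V ℝ :=
  ∏ p ∈ Finset.univ.filter (fun p : V × V => p.1 < p.2 ∧ G.Adj p.1 p.2), (X p.1 - X p.2)

/-- `G` is Alon–Tarsi `k`-choosable: `P_G` has a monomial with non-zero coefficient all of whose
exponents are at most `k - 1`. -/
def IsAT {V : Type} [Fintype V] [LinearOrder V] (G : SimpleGraph V) [DecidableRel G.Adj]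
    (k : ℕ) : Prop :=
  ∃ t : V →₀ ℕ, (graphPoly G).coeff t ≠ 0 ∧ ∀ i, t i + 1 ≤ k

/-- The Alon–Tarsi number of `G`: the least `k` such that `G` is Alon–Tarsi `k`-choosable. -/
noncomputable def ATnum {V : Type} [Fintype V] [LinearOrder V] (G : SimpleGraph V)
    [DecidableRel G.Adj] : ℕ :=
  sInf {k | IsAT G k}

/-- `AT(G) ≥ 1 + ⌈m(G)⌉`, where `m(G)` is the maximum density: for every nonempty subgraph `H`
of `G`, `AT(G) ≥ 1 + ⌈e(H)/v(H)⌉`. -/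
theorem AT_ge_density (n : ℕ) (G : SimpleGraph (Fin n)) [DecidableRel G.Adj]
    (H : G.Subgraph) (hne : H.verts.Nonempty) :
    ⌈(H.edgeSet.ncard : ℚ) / (H.verts.ncard : ℚ)⌉ + 1 ≤ (ATnum G : ℤ) := by
  classical
  obtain ⟨v, hv⟩ := hne
  -- the graph polynomial is nonzero
  have hX : ∀ a b : Fin n, a ≠ b → (X a - X b : MvPolynomial (Fin n) ℝ) ≠ 0 := by
    intro a b hab h
    have := congrArg (coeff (Finsupp.single a 1)) h
    simp [coeff_X', Finsupp.single_eq_single_iff, hab, Ne.symm hab] at this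
  have hP : graphPoly G ≠ 0 := by
    rw [graphPoly]
    apply Finset.prod_ne_zero_iff.2
    intro p hp
    simp only [Finset.mem_filter] at hp
    exact hX _ _ (ne_of_lt hp.2.1)
  have hSet : {k | IsAT G k}.Nonempty := by
    obtain ⟨t, ht⟩ := ne_zero_iff.1 hP
    refine ⟨(∑ i, t i) + 1, t, ht, fun i => ?_⟩
    have : t i ≤ ∑ j, t j := Finset.single_le_sum (fun j _ => Nat.zero_le _) (mem_univ i)
    omega
  have hAT : IsAT G (ATnum G) := Nat.sInf_mem hSet
  obtain ⟨t, hcoeff, hbound⟩ := hAT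
  set k := ATnum G with hk
  have hk1 : 1 ≤ k := le_trans (by omega) (hbound v)
  -- vertex finset
  have hfin : H.verts.Finite := Set.toFinite _
  set S : Finset (Fin n) := hfin.toFinset with hS
  have hvcard : H.verts.ncard = S.card := by
    rw [hS, Set.ncard_eq_toFinset_card _ hfin]
  -- edge count
  set F'' : Finset (Fin n × Fin n) :=
    Finset.univ.filter (fun p : Fin n × Fin n => p.1 < p.2 ∧ H.Adj p.1 p.2) with hF''
  have hedge : H.edgeSet = ↑(F''.image (fun p : Fin n × Fin n => s(p.1, p.2))) := by
    ext e
    induction e with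
    | _ x y =>
      simp only [SimpleGraph.Subgraph.mem_edgeSet, Finset.coe_image, Set.mem_image,
        Finset.mem_coe, hF'', Finset.mem_filter, Finset.mem_univ, true_and]
      constructor
      · intro hxy
        have hne' : x ≠ y := (H.adj_sub hxy).ne
        rcases hne'.lt_or_gt with hlt | hlt
        · exact ⟨(x, y), ⟨hlt, hxy⟩, rfl⟩
        · exact ⟨(y, x), ⟨hlt, hxy.symm⟩, Sym2.eq_swap⟩
      · rintro ⟨p, ⟨_, hadj⟩, hpe⟩
        have := Sym2.eq_iff.1 hpe
        rcases this with ⟨h1, h2⟩ | ⟨h1, h2⟩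
        · rwa [h1, h2] at hadj
        · rw [h1, h2] at hadj; exact hadj.symm
  have hecard : H.edgeSet.ncard ≤ F''.card := by
    rw [hedge, Set.ncard_coe_finset]
    exact Finset.card_image_le
  -- F'' is contained in the "inside S" filter of the graphPoly index set
  set F : Finset (Fin n × Fin n) :=
    Finset.univ.filter (fun p : Fin n × Fin n => p.1 < p.2 ∧ G.Adj p.1 p.2) with hF
  have hsub : F'' ⊆ F.filter (fun p => p.1 ∈ S ∧ p.2 ∈ S) := by
    intro p hp
    simp only [hF'', Finset.mem_filter, Finset.mem_univ, true_and] at hp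
    simp only [hF, Finset.mem_filter, Finset.mem_univ, true_and, hS,
      Set.Finite.mem_toFinset]
    exact ⟨⟨hp.1, H.adj_sub hp.2⟩, H.edge_vert hp.2, H.edge_vert hp.2.symm⟩
  have hkey : (F.filter (fun p => p.1 ∈ S ∧ p.2 ∈ S)).card ≤ ∑ i ∈ S, t i :=
    key_aux S F t hcoeff
  have hsum_le : ∑ i ∈ S, t i ≤ S.card * (k - 1) := by
    calc ∑ i ∈ S, t i ≤ ∑ _i ∈ S, (k - 1) :=
          Finset.sum_le_sum (fun i _ => by have := hbound i; omega)
      _ = S.card * (k - 1) := by rw [Finset.sum_const, smul_eq_mul]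
  have hmain : H.edgeSet.ncard ≤ H.verts.ncard * (k - 1) := by
    rw [hvcard]
    exact le_trans hecard (le_trans (Finset.card_le_card hsub) (le_trans hkey hsum_le))
  -- conclude
  have hvpos : 0 < H.verts.ncard := by
    rw [hvcard]
    exact Finset.card_pos.2 ⟨v, hfin.mem_toFinset.2 hv⟩
  have hq : (H.edgeSet.ncard : ℚ) / (H.verts.ncard : ℚ) ≤ ((k : ℤ) - 1 : ℤ) := by
    rw [div_le_iff₀ (by exact_mod_cast hvpos)]
    push_cast
    calc (H.edgeSet.ncard : ℚ) ≤ (H.verts.ncard * (k - 1) : ℕ) := by exact_mod_cast hmain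
      _ = (H.verts.ncard : ℚ) * ((k : ℚ) - 1) := by
          push_cast [Nat.cast_sub hk1]; ring
      _ = ((k : ℚ) - 1) * (H.verts.ncard : ℚ) := by ring
  have := Int.ceil_le.2 hq
  omega
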